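/- arXiv:1807.01406 — 2 statements merged into one kernel-verified Lean document; each statement's English description precedes it below -/
import Mathlib

section
/- Let P, P* ∈ ℝ^{m×n} have full column rank n and S, S* ∈ ℝ^{n×k} have full row rank n, with P S = P* S*. Then the matrix M = P† P* ∈ ℝ^{n×n} is invertible with inverse M^{-1} = S* S†, where † denotes the Moore–Penrose pseudo-inverse. -/
open Matrix BigOperators

noncomputable section

/-- `Md` is the Moore–Penrose pseudo-inverse of `M`. -/
def IsMoorePenrose {a b : Type*} [Fintype a] [Fintype b]
    (M : Matrix a b ℝ) (Md : Matrix b a ℝ) : Prop :=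
  M * Md * M = M ∧ Md * M * Md = Md ∧ (M * Md)ᵀ = M * Md ∧ (Md * M)ᵀ = Md * M

lemma isUnit_of_rank_eq {n : ℕ} (A : Matrix (Fin n) (Fin n) ℝ) (h : A.rank = n) :
    IsUnit A := by
  rw [← Matrix.mulVec_surjective_iff_isUnit]
  have hr : LinearMap.range A.mulVecLin = ⊤ := by
    apply Submodule.eq_top_of_finrank_eq
    rw [show Module.finrank ℝ (LinearMap.range A.mulVecLin) = A.rank from rfl, h,
      Module.finrank_fintype_fun_eq_card, Fintype.card_fin]
  intro v
  obtain ⟨w, hw⟩ := LinearMap.range_eq_top.mp hr v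
  exact ⟨w, hw⟩

lemma idem_full_rank_eq_one {n : ℕ} (A : Matrix (Fin n) (Fin n) ℝ)
    (hidem : A * A = A) (h : A.rank = n) : A = 1 := by
  have hu : IsUnit A := isUnit_of_rank_eq A h
  have hdet : IsUnit A.det := (Matrix.isUnit_iff_isUnit_det A).mp hu
  calc A = (A⁻¹ * A) * A := by rw [Matrix.nonsing_inv_mul A hdet, one_mul]
    _ = A⁻¹ * (A * A) := by rw [Matrix.mul_assoc]
    _ = A⁻¹ * A := by rw [hidem]
    _ = 1 := Matrix.nonsing_inv_mul A hdet

/-- If `P, P*` have full column rank `n`, `S, S*` have full row rank `n` and `P S = P* S*`,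
then `M = P† P*` is invertible with inverse `S* S†`. -/
theorem pseudoinverse_change_of_basis {m n k : ℕ}
    (P Pstar : Matrix (Fin m) (Fin n) ℝ) (S Sstar : Matrix (Fin n) (Fin k) ℝ)
    (hP : P.rank = n) (hPstar : Pstar.rank = n)
    (hS : S.rank = n) (hSstar : Sstar.rank = n)
    (hPS : P * S = Pstar * Sstar)
    (Pd : Matrix (Fin n) (Fin m) ℝ) (hPd : IsMoorePenrose P Pd)
    (Sd : Matrix (Fin k) (Fin n) ℝ) (hSd : IsMoorePenrose S Sd) :
    (Pd * Pstar) * (Sstar * Sd) = 1 ∧ (Sstar * Sd) * (Pd * Pstar) = 1 := by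
  have hPdP : Pd * P = 1 := by
    apply idem_full_rank_eq_one
    · calc (Pd * P) * (Pd * P) = Pd * (P * Pd * P) := by simp only [Matrix.mul_assoc]
        _ = Pd * P := by rw [hPd.1]
    · refine le_antisymm ((Pd * P).rank_le_card_width.trans (by simp)) ?_
      calc n = P.rank := hP.symm
        _ = (P * (Pd * P)).rank := by rw [← Matrix.mul_assoc, hPd.1]
        _ ≤ (Pd * P).rank := Matrix.rank_mul_le_right _ _
  have hSSd : S * Sd = 1 := by
    apply idem_full_rank_eq_one
    · calc (S * Sd) * (S * Sd) = (S * Sd * S) * Sd := by simp only [Matrix.mul_assoc]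
        _ = S * Sd := by rw [hSd.1]
    · refine le_antisymm ((S * Sd).rank_le_card_width.trans (by simp)) ?_
      calc n = S.rank := hS.symm
        _ = ((S * Sd) * S).rank := by rw [hSd.1]
        _ ≤ (S * Sd).rank := Matrix.rank_mul_le_left _ _
  have key : (Pd * Pstar) * (Sstar * Sd) = 1 := by
    calc (Pd * Pstar) * (Sstar * Sd) = Pd * (Pstar * Sstar) * Sd := by simp only [Matrix.mul_assoc]
      _ = Pd * (P * S) * Sd := by rw [hPS]
      _ = (Pd * P) * (S * Sd) := by simp only [Matrix.mul_assoc]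
      _ = 1 := by rw [hPdP, hSSd, one_mul]
  exact ⟨key, mul_eq_one_comm.mp key⟩

end
end

section
/- (Consistency of the spectral learning algorithm, Theorem 4.) Let (h₀, 𝒜, Ω) be a minimal linear 2-RNN with n hidden units computing f : (ℝᵈ)* → ℝᵖ, and let L be such that rank(⟨⟨H^{(2L)}_f⟩⟩_{L,L+1}) = n. For l ∈ {L, 2L, 2L+1}, suppose datasets D_l = {((x₁^{(i)},…,x_l^{(i)}), y^{(i)})}_{i=1}^{N_l} are given where every coordinate of every x_j^{(i)} is drawn i.i.d. from the standard normal distribution and y^{(i)} = f(x₁^{(i)},…,x_l^{(i)}) exactly. If N_l ≥ d^l for all three values of l, then with probability one: (i) for each l, the unique least-squares solution Ĥ^{(l)} = argmin_T ‖X ⟨⟨T⟩⟩_{l,1} − Y‖_F² (where X has rows x₁^{(i)}⊗⋯⊗x_l^{(i)} and Y has rows y^{(i)}) equals the true Hankel tensor H^{(l)}_f; and (ii) the linear 2-RNN constructed from Ĥ^{(L)}, Ĥ^{(2L)}, Ĥ^{(2L+1)} via any rank-n factorization ⟨⟨Ĥ^{(2L)}⟩⟩_{L,L+1} = PS and the formulas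 α = (S†)ᵀ⟨⟨Ĥ^{(L)}⟩⟩_{L+1}, Ωᵀ = P†⟨⟨Ĥ^{(L)}⟩⟩_{L,1}, 𝒜 = ⟨⟨Ĥ^{(2L+1)}⟩⟩_{L,1,L+1} ×₁ P† ×₃ (S†)ᵀ computes f. -/
open Matrix BigOperators

noncomputable section

def rnnStep {n d : ℕ} (A : Fin n → Fin d → Fin n → ℝ) (h : Fin n → ℝ) (x : Fin d → ℝ) :
    Fin n → ℝ := fun j => ∑ i, ∑ σ, A i σ j * h i * x σ

def hState {n d : ℕ} (A : Fin n → Fin d → Fin n → ℝ) (h₀ : Fin n → ℝ)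
    (xs : List (Fin d → ℝ)) : Fin n → ℝ := xs.foldl (rnnStep A) h₀

def rnnOut {n d p : ℕ} (h₀ : Fin n → ℝ) (A : Fin n → Fin d → Fin n → ℝ)
    (Ω : Fin p → Fin n → ℝ) (xs : List (Fin d → ℝ)) : Fin p → ℝ :=
  fun m => ∑ j, Ω m j * hState A h₀ xs j
open MeasureTheory ProbabilityTheory

def oneHot {d : ℕ} (σ : Fin d) : Fin d → ℝ := Pi.single σ 1

/-- Hankel tensor of order `l+1`: entries `f(e_{i₁},…,e_{i_l})`. -/
def hankel {d p : ℕ} (f : List (Fin d → ℝ) → Fin p → ℝ) (l : ℕ) :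
    (Fin l → Fin d) → Fin p → ℝ :=
  fun i m => f (List.ofFn fun t => oneHot (i t)) m

/-- Concatenation of two multi-indices of length `L` into one of length `2L`. -/
def glue {L d : ℕ} (u v : Fin L → Fin d) : Fin (2 * L) → Fin d :=
  fun t => if h : (t : ℕ) < L then u ⟨t, h⟩ else v ⟨(t : ℕ) - L, by have := t.isLt; omega⟩

/-- Concatenation `(u, σ, v)` into a multi-index of length `2L+1`. -/
def glue3 {L d : ℕ} (u : Fin L → Fin d) (σ : Fin d) (v : Fin L → Fin d) :
    Fin (2 * L + 1) → Fin d :=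
  fun t => if h : (t : ℕ) < L then u ⟨t, h⟩
    else if h2 : (t : ℕ) = L then σ else v ⟨(t : ℕ) - L - 1, by have := t.isLt; omega⟩

/-- Squared-Frobenius least-squares objective `‖X ⟨⟨T⟩⟩_{l,1} − Y‖_F²` where `X` has rows
`x₁^{(i)} ⊗ ⋯ ⊗ x_l^{(i)}` and `Y` has rows `y^{(i)} = f(x₁^{(i)},…,x_l^{(i)})`. -/
def lsLoss {N l d p : ℕ} (f : List (Fin d → ℝ) → Fin p → ℝ)
    (x : Fin N × Fin l × Fin d → ℝ) (T : (Fin l → Fin d) → Fin p → ℝ) : ℝ :=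
  ∑ i : Fin N, ∑ m : Fin p,
    ((∑ c : Fin l → Fin d, T c m * ∏ t, x (i, t, c t))
      - f (List.ofFn fun t => fun σ => x (i, t, σ)) m) ^ 2

/-- `T` is a least-squares solution for the dataset `x` with exact outputs from `f`. -/
def IsLS {N l d p : ℕ} (f : List (Fin d → ℝ) → Fin p → ℝ)
    (x : Fin N × Fin l × Fin d → ℝ) (T : (Fin l → Fin d) → Fin p → ℝ) : Prop :=
  ∀ T', lsLoss f x T ≤ lsLoss f x T'

def IsMinimal {d p : ℕ} (n : ℕ) (f : List (Fin d → ℝ) → Fin p → ℝ) : Prop :=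
  ∀ (n' : ℕ) (h₀' : Fin n' → ℝ) (A' : Fin n' → Fin d → Fin n' → ℝ) (Ω' : Fin p → Fin n' → ℝ),
    (∀ xs, rnnOut h₀' A' Ω' xs = f xs) → n ≤ n'

section RNNAlgebra

variable {n d p : ℕ} (A : Fin n → Fin d → Fin n → ℝ)

/-- Transition matrix of one input vector. -/
def transMat (x : Fin d → ℝ) : Matrix (Fin n) (Fin n) ℝ :=
  Matrix.of fun i j => ∑ σ, A i σ j * x σ

lemma rnnStep_eq (h : Fin n → ℝ) (x : Fin d → ℝ) :
    rnnStep A h x = Matrix.vecMul h (transMat A x) := by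
  funext j
  simp only [rnnStep, transMat, Matrix.vecMul, dotProduct, Matrix.of_apply,
    Finset.mul_sum]
  exact Finset.sum_congr rfl fun i _ => Finset.sum_congr rfl fun σ _ => by ring

/-- Product of transition matrices along a word. -/
def TT (xs : List (Fin d → ℝ)) : Matrix (Fin n) (Fin n) ℝ :=
  (xs.map (transMat A)).prod

lemma TT_nil : TT A ([] : List (Fin d → ℝ)) = 1 := by simp [TT]

lemma TT_cons (x : Fin d → ℝ) (xs : List (Fin d → ℝ)) :
    TT A (x :: xs) = transMat A x * TT A xs := by simp [TT]

lemma hState_cons (h : Fin n → ℝ) (x : Fin d → ℝ) (xs : List (Fin d → ℝ)) :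
    hState A h (x :: xs) = hState A (rnnStep A h x) xs := rfl

lemma hState_eq (xs : List (Fin d → ℝ)) : ∀ h : Fin n → ℝ,
    hState A h xs = Matrix.vecMul h (TT A xs) := by
  induction xs with
  | nil => intro h; simp [hState, TT_nil]
  | cons x xs ih =>
      intro h
      rw [hState_cons, ih, rnnStep_eq, Matrix.vecMul_vecMul, TT_cons]

lemma hState_append (h : Fin n → ℝ) (xs ys : List (Fin d → ℝ)) :
    hState A h (xs ++ ys) = hState A (hState A h xs) ys := by
  simp [hState, List.foldl_append]

lemma transMat_oneHot (σ : Fin d) (i j : Fin n) :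
    transMat A (oneHot σ) i j = A i σ j := by
  simp [transMat, oneHot, Pi.single_apply, mul_ite]

lemma transMat_decomp (x : Fin d → ℝ) :
    transMat A x = ∑ σ, x σ • transMat A (oneHot σ) := by
  ext i j
  simp only [Matrix.sum_apply, Matrix.smul_apply, transMat_oneHot, smul_eq_mul]
  simp only [transMat, Matrix.of_apply]
  exact Finset.sum_congr rfl fun σ _ => by ring

/-- Transition matrix of a one-hot word. -/
def TTo (c : Fin n → Fin n) : Matrix (Fin n) (Fin n) ℝ := 1

end RNNAlgebra
section Multilinear

variable {n d p : ℕ} (A : Fin n → Fin d → Fin n → ℝ)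

/-- One-hot word from a multi-index. -/
def ohWord {d : ℕ} {l : ℕ} (c : Fin l → Fin d) : List (Fin d → ℝ) :=
  List.ofFn fun t => oneHot (c t)

lemma TT_ofFn_decomp : ∀ (l : ℕ) (xs : Fin l → Fin d → ℝ),
    TT A (List.ofFn xs) =
      ∑ c : Fin l → Fin d, (∏ t, xs t (c t)) • TT A (ohWord c) := by
  intro l
  induction l with
  | zero =>
      intro xs
      have : ∀ c : Fin 0 → Fin d, TT A (ohWord c) = 1 := by
        intro c; simp [ohWord, TT_nil]
      simp [this, List.ofFn_zero, TT_nil]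
  | succ l ih =>
      intro xs
      rw [List.ofFn_succ, TT_cons, transMat_decomp, ih (fun t => xs t.succ)]
      rw [Finset.sum_mul_sum]
      rw [← (Fin.consEquiv (fun _ => Fin d)).sum_comp
        (fun c => (∏ t, xs t (c t)) • TT A (ohWord c)), Fintype.sum_prod_type]
      refine Finset.sum_congr rfl fun σ _ => Finset.sum_congr rfl fun c' _ => ?_
      have h1 : (Fin.consEquiv (fun _ => Fin d)) (σ, c') = Fin.cons σ c' := rfl
      have h2 : ohWord (Fin.cons σ c' : Fin (l+1) → Fin d) = oneHot σ :: ohWord c' := by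
        simp only [ohWord, List.ofFn_succ, Fin.cons_zero, Fin.cons_succ]
      have h3 : (∏ t : Fin (l+1), xs t ((Fin.cons σ c' : Fin (l+1) → Fin d) t)) =
          xs 0 σ * ∏ t : Fin l, xs t.succ (c' t) := by
        rw [Fin.prod_univ_succ]; simp [Fin.cons_zero, Fin.cons_succ]
      rw [h1, h2, h3, TT_cons]
      rw [smul_mul_assoc, mul_smul_comm, smul_smul]

end Multilinear
section Helper

lemma triple_swap {α β γ : Type*} [Fintype α] [Fintype β] [Fintype γ] (g : α → β → γ → ℝ) :
    ∑ a, ∑ b, ∑ c, g a b c = ∑ c, ∑ a, ∑ b, g a b c := by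
  calc ∑ a, ∑ b, ∑ c, g a b c = ∑ a, ∑ c, ∑ b, g a b c :=
        Finset.sum_congr rfl fun a _ => Finset.sum_comm
    _ = ∑ c, ∑ a, ∑ b, g a b c := Finset.sum_comm

lemma vecMul_single {n m : ℕ} (M : Matrix (Fin n) (Fin m) ℝ) (k : Fin n) :
    Matrix.vecMul (Pi.single k 1) M = fun j => M k j := by
  funext j
  simp [Matrix.vecMul, single_dotProduct]

end Helper

section Repr

variable {n d p : ℕ} (A : Fin n → Fin d → Fin n → ℝ)

lemma hState_linear (xs : List (Fin d → ℝ)) (h : Fin n → ℝ) (j : Fin n) :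
    hState A h xs j = ∑ i, h i * hState A (Pi.single i 1) xs j := by
  simp only [hState_eq A xs, vecMul_single]
  simp only [Matrix.vecMul, dotProduct]

variable (h₀ : Fin n → ℝ) (Ω : Fin p → Fin n → ℝ)
variable (f : List (Fin d → ℝ) → Fin p → ℝ)

lemma hankel_out (hf : ∀ xs, f xs = rnnOut h₀ A Ω xs) (l : ℕ) (c : Fin l → Fin d) (m : Fin p) :
    hankel f l c m = ∑ j, Ω m j * hState A h₀ (ohWord c) j := by
  rw [hankel, hf]; rfl

lemma f_repr (hf : ∀ xs, f xs = rnnOut h₀ A Ω xs) (l : ℕ) (xs : Fin l → Fin d → ℝ) (m : Fin p) :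
    f (List.ofFn xs) m = ∑ c : Fin l → Fin d, hankel f l c m * ∏ t, xs t (c t) := by
  have key : ∀ c : Fin l → Fin d, hankel f l c m =
      ∑ j, Ω m j * ∑ i, h₀ i * TT A (ohWord c) i j := by
    intro c
    rw [hankel_out A h₀ Ω f hf]
    refine Finset.sum_congr rfl fun j _ => ?_
    rw [hState_eq]
    simp [Matrix.vecMul, dotProduct]
  rw [hf]
  unfold rnnOut
  calc ∑ j, Ω m j * hState A h₀ (List.ofFn xs) j
      = ∑ j, ∑ i, ∑ c : Fin l → Fin d,
          Ω m j * (h₀ i * ((∏ t, xs t (c t)) * TT A (ohWord c) i j)) := by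
        refine Finset.sum_congr rfl fun j _ => ?_
        rw [hState_eq, TT_ofFn_decomp]
        simp [Matrix.vecMul, dotProduct, Matrix.sum_apply, Finset.mul_sum]
    _ = ∑ c : Fin l → Fin d, ∑ j, ∑ i,
          Ω m j * (h₀ i * ((∏ t, xs t (c t)) * TT A (ohWord c) i j)) := triple_swap _
    _ = ∑ c : Fin l → Fin d, hankel f l c m * ∏ t, xs t (c t) := by
        refine Finset.sum_congr rfl fun c _ => ?_
        rw [key c]
        simp only [Finset.mul_sum, Finset.sum_mul]
        exact Finset.sum_congr rfl fun j _ => Finset.sum_congr rfl fun i _ => by ring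

end Repr
section Glue

variable {L d : ℕ}

lemma ohWord_glue (u v : Fin L → Fin d) :
    ohWord (glue u v) = ohWord u ++ ohWord v := by
  apply List.ext_getElem
  · simp [ohWord]; omega
  · intro i h1 h2
    simp only [ohWord, List.length_ofFn] at h1 h2 ⊢
    rw [List.getElem_ofFn]
    rw [List.getElem_append]
    simp only [List.length_ofFn] at h2 ⊢
    by_cases hi : i < L
    · rw [dif_pos (by simpa using hi)]
      rw [List.getElem_ofFn]
      simp only [glue]
      rw [dif_pos hi]
    · rw [dif_neg (by simpa using hi)]
      rw [List.getElem_ofFn]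
      simp only [glue]
      rw [dif_neg hi]

lemma ohWord_glue3 (u : Fin L → Fin d) (σ : Fin d) (v : Fin L → Fin d) :
    ohWord (glue3 u σ v) = ohWord u ++ (oneHot σ :: ohWord v) := by
  apply List.ext_getElem
  · simp [ohWord]; omega
  · intro i h1 h2
    simp only [ohWord, List.length_ofFn] at h1 h2 ⊢
    rw [List.getElem_ofFn]
    rw [List.getElem_append]
    simp only [List.length_ofFn] at h2 ⊢
    by_cases hi : i < L
    · rw [dif_pos (by simpa using hi)]
      rw [List.getElem_ofFn]
      simp only [glue3]
      rw [dif_pos hi]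
    · rw [dif_neg (by simpa using hi)]
      by_cases hiL : i = L
      · subst hiL
        simp only [Nat.sub_self, List.getElem_cons_zero, glue3]
        rw [dif_neg hi]
        simp
      · have hpos : 0 < i - L := by omega
        rw [List.getElem_cons]
        rw [dif_neg (by omega)]
        rw [List.getElem_ofFn]
        simp only [glue3]
        rw [dif_neg hi, dif_neg hiL]

end Glue

section Stars

variable {n d p L : ℕ} (A : Fin n → Fin d → Fin n → ℝ) (h₀ : Fin n → ℝ) (Ω : Fin p → Fin n → ℝ)

/-- Forward matrix: states reached on one-hot words of length `L`. -/
def PstarM : Matrix (Fin L → Fin d) (Fin n) ℝ :=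
  Matrix.of fun u j => hState A h₀ (ohWord u) j

/-- Backward matrix. -/
def SstarM : Matrix (Fin n) ((Fin L → Fin d) × Fin p) ℝ :=
  Matrix.of fun k c => ∑ j, Ω c.2 j * hState A (Pi.single k 1) (ohWord c.1) j

variable (f : List (Fin d → ℝ) → Fin p → ℝ)

lemma hankelL_P (hf : ∀ xs, f xs = rnnOut h₀ A Ω xs) (u : Fin L → Fin d) (m : Fin p) :
    hankel f L u m = ∑ j, Ω m j * (PstarM A h₀ : Matrix _ _ ℝ) u j :=
  hankel_out A h₀ Ω f hf L u m

lemma hankelL_S (hf : ∀ xs, f xs = rnnOut h₀ A Ω xs) (u : Fin L → Fin d) (m : Fin p) :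
    hankel f L u m = ∑ k, h₀ k * (SstarM A Ω : Matrix _ _ ℝ) k (u, m) := by
  rw [hankel_out A h₀ Ω f hf]
  simp only [SstarM, Matrix.of_apply]
  calc ∑ j, Ω m j * hState A h₀ (ohWord u) j
      = ∑ j, ∑ k, Ω m j * (h₀ k * hState A (Pi.single k 1) (ohWord u) j) := by
        refine Finset.sum_congr rfl fun j _ => ?_
        rw [hState_linear A (ohWord u) h₀ j, Finset.mul_sum]
    _ = ∑ k, ∑ j, Ω m j * (h₀ k * hState A (Pi.single k 1) (ohWord u) j) := Finset.sum_comm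
    _ = ∑ k, h₀ k * ∑ j, Ω m j * hState A (Pi.single k 1) (ohWord u) j := by
        refine Finset.sum_congr rfl fun k _ => ?_
        rw [Finset.mul_sum]
        exact Finset.sum_congr rfl fun j _ => by ring

lemma hankel2_PS (hf : ∀ xs, f xs = rnnOut h₀ A Ω xs) (u v : Fin L → Fin d) (m : Fin p) :
    hankel f (2 * L) (glue u v) m =
      ∑ k, (PstarM A h₀ : Matrix _ _ ℝ) u k * (SstarM A Ω : Matrix _ _ ℝ) k (v, m) := by
  rw [hankel_out A h₀ Ω f hf, ohWord_glue]
  calc ∑ j, Ω m j * hState A h₀ (ohWord u ++ ohWord v) j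
      = ∑ j, Ω m j * ∑ k, (PstarM A h₀ : Matrix _ _ ℝ) u k
          * hState A (Pi.single k 1) (ohWord v) j := by
        refine Finset.sum_congr rfl fun j _ => ?_
        rw [hState_append, hState_linear]
        rfl
    _ = ∑ k, (PstarM A h₀ : Matrix _ _ ℝ) u k * (SstarM A Ω : Matrix _ _ ℝ) k (v, m) := by
        simp only [Finset.mul_sum, SstarM, Matrix.of_apply]
        rw [Finset.sum_comm]
        exact Finset.sum_congr rfl fun k _ => Finset.sum_congr rfl fun j _ => by ring

lemma rnnStep_single_oneHot (h : Fin n → ℝ) (σ : Fin d) (k : Fin n) :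
    rnnStep A h (oneHot σ) k = ∑ i, h i * A i σ k := by
  rw [rnnStep_eq]
  simp only [Matrix.vecMul, dotProduct, transMat_oneHot]

lemma hankel3_PAS (hf : ∀ xs, f xs = rnnOut h₀ A Ω xs) (u : Fin L → Fin d) (σ : Fin d)
    (v : Fin L → Fin d) (m : Fin p) :
    hankel f (2 * L + 1) (glue3 u σ v) m =
      ∑ j, ∑ k, (PstarM A h₀ : Matrix _ _ ℝ) u j * A j σ k
        * (SstarM A Ω : Matrix _ _ ℝ) k (v, m) := by
  rw [hankel_out A h₀ Ω f hf, ohWord_glue3]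
  calc ∑ j, Ω m j * hState A h₀ (ohWord u ++ (oneHot σ :: ohWord v)) j
      = ∑ j, ∑ k, ∑ i, Ω m j * (((PstarM A h₀ : Matrix _ _ ℝ) u i * A i σ k)
          * hState A (Pi.single k 1) (ohWord v) j) := by
        refine Finset.sum_congr rfl fun j _ => ?_
        rw [hState_append, hState_cons, hState_linear]
        simp only [Finset.mul_sum]
        refine Finset.sum_congr rfl fun k _ => ?_
        rw [rnnStep_single_oneHot]
        simp only [Finset.sum_mul, Finset.mul_sum]
        rfl
    _ = ∑ i, ∑ j, ∑ k, Ω m j * (((PstarM A h₀ : Matrix _ _ ℝ) u i * A i σ k)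
          * hState A (Pi.single k 1) (ohWord v) j) := triple_swap _
    _ = ∑ i, ∑ k, ∑ j, Ω m j * (((PstarM A h₀ : Matrix _ _ ℝ) u i * A i σ k)
          * hState A (Pi.single k 1) (ohWord v) j) :=
        Finset.sum_congr rfl fun i _ => Finset.sum_comm
    _ = ∑ j, ∑ k, (PstarM A h₀ : Matrix _ _ ℝ) u j * A j σ k
        * (SstarM A Ω : Matrix _ _ ℝ) k (v, m) := by
        refine Finset.sum_congr rfl fun i _ => Finset.sum_congr rfl fun k _ => ?_
        simp only [SstarM, Matrix.of_apply, Finset.mul_sum]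
        exact Finset.sum_congr rfl fun j _ => by ring

end Stars
section RankCancel

variable {k o m : Type*} [Fintype k] [Fintype o] [Fintype m] [DecidableEq k] [DecidableEq o] [DecidableEq m]

lemma mulVec_injective_of_rank {M : Matrix m k ℝ} (h : M.rank = Fintype.card k) :
    Function.Injective M.mulVec := by
  have h1 := LinearMap.finrank_range_add_finrank_ker M.mulVecLin
  rw [show Module.finrank ℝ ↥(LinearMap.range M.mulVecLin) = M.rank from rfl, h,
    Module.finrank_fintype_fun_eq_card] at h1
  have hker : Module.finrank ℝ ↥(LinearMap.ker M.mulVecLin) = 0 := by omega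
  have hbot := Submodule.finrank_eq_zero.mp hker
  have hinj : Function.Injective M.mulVecLin := LinearMap.ker_eq_bot.mp hbot
  intro a b hab
  exact hinj (by simpa [Matrix.mulVecLin_apply] using hab)

lemma left_cancel {M : Matrix m k ℝ} (h : M.rank = Fintype.card k)
    {B C : Matrix k o ℝ} (hBC : M * B = M * C) : B = C := by
  ext i j
  have hv : M.mulVec (fun a => B a j) = M.mulVec (fun a => C a j) := by
    funext r
    have := congrFun (congrFun hBC r) j
    simpa [Matrix.mulVec, Matrix.mul_apply, dotProduct] using this
  exact congrFun (mulVec_injective_of_rank h hv) i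

lemma right_cancel {M : Matrix k o ℝ} (h : M.rank = Fintype.card k)
    {B C : Matrix m k ℝ} (hBC : B * M = C * M) : B = C := by
  have hT : (M.transpose).rank = Fintype.card k := by rw [Matrix.rank_transpose]; exact h
  have h2 : M.transpose * B.transpose = M.transpose * C.transpose := by
    rw [← Matrix.transpose_mul, ← Matrix.transpose_mul, hBC]
  have h3 := left_cancel hT h2
  calc B = B.transpose.transpose := by rw [Matrix.transpose_transpose]
    _ = C.transpose.transpose := by rw [h3]
    _ = C := by rw [Matrix.transpose_transpose]

end RankCancel

section Conj

variable {n d p : ℕ}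

lemma rnn_conj (A : Fin n → Fin d → Fin n → ℝ) (h₀ : Fin n → ℝ) (Ω : Fin p → Fin n → ℝ)
    (M N : Matrix (Fin n) (Fin n) ℝ) (hMN : M * N = 1)
    (h₀' : Fin n → ℝ) (A' : Fin n → Fin d → Fin n → ℝ) (Ω' : Fin p → Fin n → ℝ)
    (hh : h₀' = fun j => ∑ i, h₀ i * M i j)
    (hA : ∀ a σ b, A' a σ b = ∑ j, ∑ i, N a j * A j σ i * M i b)
    (hΩ : ∀ m a, Ω' m a = ∑ j, N a j * Ω m j) :
    ∀ xs, rnnOut h₀' A' Ω' xs = rnnOut h₀ A Ω xs := by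
  have hNM : N * M = 1 := mul_eq_one_comm.mp hMN
  have hT : ∀ x, transMat A' x = N * transMat A x * M := by
    intro x
    ext a b
    have hL : transMat A' x a b = ∑ j, ∑ i, ∑ σ, N a j * A j σ i * M i b * x σ := by
      simp only [transMat, Matrix.of_apply]
      calc ∑ σ, A' a σ b * x σ
          = ∑ σ, ∑ j, ∑ i, N a j * A j σ i * M i b * x σ := by
            refine Finset.sum_congr rfl fun σ _ => ?_
            rw [hA, Finset.sum_mul]
            exact Finset.sum_congr rfl fun j _ => by rw [Finset.sum_mul]
        _ = ∑ j, ∑ i, ∑ σ, N a j * A j σ i * M i b * x σ := by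
            rw [triple_swap, triple_swap]
    have hR : (N * transMat A x * M) a b = ∑ j, ∑ i, ∑ σ, N a j * A j σ i * M i b * x σ := by
      simp only [Matrix.mul_apply, transMat, Matrix.of_apply, Finset.sum_mul, Finset.mul_sum]
      rw [Finset.sum_comm]
      exact Finset.sum_congr rfl fun j _ => Finset.sum_congr rfl fun i _ =>
        Finset.sum_congr rfl fun σ _ => by ring
    rw [hL, hR]
  have hTT : ∀ xs : List (Fin d → ℝ), TT A' xs = N * TT A xs * M := by
    intro xs
    induction xs with
    | nil => rw [TT_nil, TT_nil, Matrix.mul_one, hNM]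
    | cons x xs ih =>
        rw [TT_cons, TT_cons, ih, hT]
        calc N * transMat A x * M * (N * TT A xs * M)
            = N * transMat A x * (M * (N * (TT A xs * M))) := by
              simp only [Matrix.mul_assoc]
          _ = N * transMat A x * (TT A xs * M) := by
              rw [← Matrix.mul_assoc M N, hMN, Matrix.one_mul]
          _ = N * (transMat A x * TT A xs) * M := by simp only [Matrix.mul_assoc]
  intro xs
  funext m
  unfold rnnOut
  have hh' : h₀' = Matrix.vecMul h₀ M := by
    rw [hh]; funext j; simp [Matrix.vecMul, dotProduct]
  have hstate : hState A' h₀' xs = Matrix.vecMul (hState A h₀ xs) M := by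
    rw [hh', hState_eq, hState_eq, hTT, Matrix.vecMul_vecMul, Matrix.vecMul_vecMul]
    rw [show M * (N * TT A xs * M) = TT A xs * M from by
      calc M * (N * TT A xs * M) = M * N * (TT A xs * M) := by simp only [Matrix.mul_assoc]
        _ = TT A xs * M := by rw [hMN, Matrix.one_mul]]
  rw [hstate]
  calc ∑ a, Ω' m a * Matrix.vecMul (hState A h₀ xs) M a
      = ∑ a, ∑ j, ∑ i, N a j * Ω m j * (hState A h₀ xs i * M i a) := by
        refine Finset.sum_congr rfl fun a _ => ?_
        rw [hΩ, Finset.sum_mul]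
        refine Finset.sum_congr rfl fun j _ => ?_
        simp only [Matrix.vecMul, dotProduct, Finset.mul_sum]
    _ = ∑ j, ∑ i, ∑ a, N a j * Ω m j * (hState A h₀ xs i * M i a) := by
        rw [triple_swap, triple_swap]
    _ = ∑ j, Ω m j * hState A h₀ xs j := by
        refine Finset.sum_congr rfl fun j _ => ?_
        have hcol : ∀ i, ∑ a, N a j * Ω m j * (hState A h₀ xs i * M i a)
            = Ω m j * hState A h₀ xs i * (M * N) i j := by
          intro i
          rw [Matrix.mul_apply, Finset.mul_sum]
          exact Finset.sum_congr rfl fun a _ => by ring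
        simp only [hcol, hMN, Matrix.one_apply, mul_ite, mul_one, mul_zero]
        rw [Finset.sum_ite_eq' Finset.univ j (fun i => Ω m j * hState A h₀ xs i)]
        simp

end Conj
section PolyNull

open MeasureTheory ProbabilityTheory

lemma measurable_mveval {ι : Type*} [Fintype ι] (q : MvPolynomial ι ℝ) :
    Measurable fun x : ι → ℝ => MvPolynomial.eval x q := by
  induction q using MvPolynomial.induction_on with
  | C a => simpa using measurable_const
  | add q r hq hr => simp only [map_add]; exact hq.add hr
  | mul_X q i hq => simp only [_root_.map_mul, MvPolynomial.eval_X]; exact hq.mul (measurable_pi_apply i)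

instance gaussian_noAtoms : NullSingletonClass (gaussianReal 0 1) := by
  rw [gaussianReal_of_var_ne_zero 0 one_ne_zero]
  constructor
  intro a
  exact withDensity_absolutelyContinuous _ _ (measure_singleton a)

lemma ae_eval_ne_zero_fin : ∀ (k : ℕ) (q : MvPolynomial (Fin k) ℝ), q ≠ 0 →
    ∀ᵐ x ∂(Measure.pi fun _ : Fin k => gaussianReal 0 1),
      MvPolynomial.eval x q ≠ 0 := by
  intro k
  induction k with
  | zero =>
      intro q hq
      obtain ⟨c, rfl⟩ := (MvPolynomial.C_surjective (Fin 0)) q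
      have hc : c ≠ 0 := fun h => hq (by rw [h, map_zero])
      filter_upwards with x
      simpa using hc
  | succ k ih =>
      intro q hq
      set Q := MvPolynomial.finSuccEquiv ℝ k q with hQdef
      have hQ0 : Q ≠ 0 := fun h => hq (by
        have h2 := congrArg (MvPolynomial.finSuccEquiv ℝ k).symm h
        simpa [hQdef] using h2)
      have hlead : Q.coeff Q.natDegree ≠ 0 := Polynomial.leadingCoeff_ne_zero.mpr hQ0
      have tail_ae := ih (Q.coeff Q.natDegree) hlead
      have hmeas2 : Measurable fun z : ℝ × (Fin k → ℝ) =>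
          MvPolynomial.eval (Fin.cons z.1 z.2) q := by
        apply (measurable_mveval q).comp
        refine measurable_pi_iff.mpr fun i => ?_
        refine Fin.cases ?_ (fun j => ?_) i
        · simpa using measurable_fst
        · exact (measurable_pi_apply j).comp measurable_snd
      have hmeasSet : MeasurableSet {z : ℝ × (Fin k → ℝ) |
          MvPolynomial.eval (Fin.cons z.1 z.2) q ≠ 0} := by
        have h1 : MeasurableSet {z : ℝ × (Fin k → ℝ) |
            MvPolynomial.eval (Fin.cons z.1 z.2) q = 0} := hmeas2 (MeasurableSet.singleton 0)
        exact h1.compl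
      have key : ∀ᵐ z ∂((gaussianReal 0 1).prod
          (Measure.pi fun _ : Fin k => gaussianReal 0 1)),
          MvPolynomial.eval (Fin.cons z.1 z.2) q ≠ 0 := by
        rw [Measure.ae_prod_iff_ae_ae hmeasSet]
        rw [Measure.ae_ae_comm (by exact hmeasSet)]
        filter_upwards [tail_ae] with y hy
        set py : Polynomial ℝ := Q.map (MvPolynomial.eval y) with hpy
        have hpy0 : py ≠ 0 := fun h => by
          have : py.coeff Q.natDegree = 0 := by rw [h]; simp
          rw [hpy, Polynomial.coeff_map] at this
          exact hy this
        have hroots : {a : ℝ | py.IsRoot a}.Finite := Polynomial.finite_setOf_isRoot hpy0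
        have hnull : (gaussianReal 0 1) {a : ℝ | py.IsRoot a} = 0 :=
          hroots.measure_zero _
        rw [MeasureTheory.ae_iff]
        convert hnull using 2
        ext a
        simp only [Set.mem_setOf_eq, not_not, Polynomial.IsRoot.def]
        rw [MvPolynomial.eval_eq_eval_mv_eval']
      -- transfer along the measure-preserving equivalence
      have hmp := measurePreserving_piFinSuccAbove
        (fun _ : Fin (k + 1) => gaussianReal 0 1) 0
      set e := MeasurableEquiv.piFinSuccAbove (fun _ : Fin (k + 1) => ℝ) 0 with hedef
      rw [← hmp.map_eq] at key
      have key2 := (MeasureTheory.ae_map_iff e.measurable.aemeasurable hmeasSet).mp key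
      filter_upwards [key2] with x hx
      have hcons : (Fin.cons (e x).1 (e x).2 : Fin (k+1) → ℝ) = x := by
        funext i
        induction i using Fin.cases with
        | zero => rfl
        | succ j =>
            simp only [Fin.cons_succ]
            exact congrArg x (Fin.zero_succAbove j)
      rwa [hcons] at hx
      
lemma ae_eval_ne_zero {ι : Type*} [Fintype ι]
    (q : MvPolynomial ι ℝ) (hq : q ≠ 0) :
    ∀ᵐ x ∂(Measure.pi fun _ : ι => gaussianReal 0 1), MvPolynomial.eval x q ≠ 0 := by
  classical
  set e := Fintype.equivFin ι with hedef
  set q' := MvPolynomial.rename e q with hq'def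
  have hq' : q' ≠ 0 := by
    intro h
    exact hq (MvPolynomial.rename_injective e e.injective (by rw [← hq'def, h, map_zero]))
  have hfin := ae_eval_ne_zero_fin (Fintype.card ι) q' hq'
  have hmp := measurePreserving_piCongrLeft (fun _ : ι => gaussianReal 0 1) e.symm
  set T := MeasurableEquiv.piCongrLeft (fun _ : ι => ℝ) e.symm with hTdef
  rw [← hmp.map_eq]
  have hms : MeasurableSet {x : ι → ℝ | MvPolynomial.eval x q ≠ 0} :=
    ((measurable_mveval q) (measurableSet_singleton 0)).compl
  rw [MeasureTheory.ae_map_iff T.measurable.aemeasurable hms]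
  filter_upwards [hfin] with y hy
  have hTy : (T : (Fin (Fintype.card ι) → ℝ) → ι → ℝ) y = fun i => y (e i) := by
    funext i
    simp [hTdef, MeasurableEquiv.piCongrLeft, Equiv.piCongrLeft, Equiv.piCongrLeft']
  show MvPolynomial.eval (T y) q ≠ 0
  rw [hTy]
  rwa [hq'def, MvPolynomial.eval_rename] at hy

end PolyNull
section Gram

open MeasureTheory ProbabilityTheory

variable {N l d : ℕ}

def measRow (x : Fin N × Fin l × Fin d → ℝ) (i : Fin N) (c : Fin l → Fin d) : ℝ :=
  ∏ t, x (i, t, c t)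

def gram (x : Fin N × Fin l × Fin d → ℝ) : Matrix (Fin l → Fin d) (Fin l → Fin d) ℝ :=
  Matrix.of fun c c' => ∑ i, measRow x i c * measRow x i c'

def Full (x : Fin N × Fin l × Fin d → ℝ) : Prop :=
  ∀ v : (Fin l → Fin d) → ℝ, (∀ i, ∑ c, v c * measRow x i c = 0) → v = 0

lemma full_of_gram_det {x : Fin N × Fin l × Fin d → ℝ} (h : (gram x).det ≠ 0) : Full x := by
  intro v hv
  by_contra hv0
  apply h
  rw [← Matrix.exists_mulVec_eq_zero_iff]
  refine ⟨v, hv0, ?_⟩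
  funext c
  show ∑ c', gram x c c' * v c' = 0
  calc ∑ c', gram x c c' * v c'
      = ∑ c', ∑ i, measRow x i c * (v c' * measRow x i c') := by
        refine Finset.sum_congr rfl fun c' _ => ?_
        simp only [_root_.gram, Matrix.of_apply, Finset.sum_mul]
        exact Finset.sum_congr rfl fun i _ => by ring
    _ = ∑ i, ∑ c', measRow x i c * (v c' * measRow x i c') := Finset.sum_comm
    _ = ∑ i, measRow x i c * ∑ c', v c' * measRow x i c' := by
        refine Finset.sum_congr rfl fun i _ => ?_
        rw [Finset.mul_sum]
    _ = 0 := by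
        refine Finset.sum_eq_zero fun i _ => ?_
        rw [hv i, mul_zero]

lemma gram_det_of_full {x : Fin N × Fin l × Fin d → ℝ} (h : Full x) : (gram x).det ≠ 0 := by
  intro hdet
  obtain ⟨v, hv0, hvz⟩ := Matrix.exists_mulVec_eq_zero_iff.mpr hdet
  have hdot : dotProduct v ((gram x).mulVec v) = 0 := by
    rw [hvz]; simp [dotProduct]
  have hquad : ∑ i, (∑ c, v c * measRow x i c) ^ 2 = 0 := by
    rw [← hdot]
    simp only [dotProduct, Matrix.mulVec, _root_.gram, Matrix.of_apply]
    calc ∑ i, (∑ c, v c * measRow x i c) ^ 2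
        = ∑ i, ∑ c, ∑ c', v c * measRow x i c * (v c' * measRow x i c') := by
          refine Finset.sum_congr rfl fun i _ => ?_
          rw [pow_two, Finset.sum_mul_sum]
      _ = ∑ c, ∑ c', ∑ i, v c * measRow x i c * (v c' * measRow x i c') := (triple_swap _).trans (triple_swap _)
      _ = ∑ c, v c * ∑ c', (∑ i, measRow x i c * measRow x i c') * v c' := by
          refine Finset.sum_congr rfl fun c _ => ?_
          simp only [Finset.mul_sum, Finset.sum_mul]
          exact Finset.sum_congr rfl fun c' _ => Finset.sum_congr rfl fun i _ => by ring
  have hrows : ∀ i, ∑ c, v c * measRow x i c = 0 := by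
    have h1 := (Finset.sum_eq_zero_iff_of_nonneg
      (fun i _ => sq_nonneg (∑ c, v c * measRow x i c))).mp hquad
    intro i
    exact sq_eq_zero_iff.mp (h1 i (Finset.mem_univ i))
  exact hv0 (h v hrows)

/-- The Gram determinant as a multivariate polynomial in the data entries. -/
def gramPoly (N l d : ℕ) : MvPolynomial (Fin N × Fin l × Fin d) ℝ :=
  Matrix.det (Matrix.of fun c c' : Fin l → Fin d =>
    ∑ i : Fin N, (∏ t, MvPolynomial.X (i, t, c t)) * (∏ t, MvPolynomial.X (i, t, c' t)))

lemma eval_gramPoly (x : Fin N × Fin l × Fin d → ℝ) :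
    MvPolynomial.eval x (gramPoly N l d) = (gram x).det := by
  rw [gramPoly, RingHom.map_det]
  congr 1
  ext c c'
  simp only [RingHom.mapMatrix_apply, Matrix.map_apply, Matrix.of_apply, map_sum,
    _root_.map_mul, map_prod, MvPolynomial.eval_X, _root_.gram, measRow]

lemma exists_full (hN : d ^ l ≤ N) : ∃ x : Fin N × Fin l × Fin d → ℝ, Full x := by
  classical
  have hcard : Fintype.card (Fin l → Fin d) ≤ Fintype.card (Fin N) := by
    rw [Fintype.card_fun, Fintype.card_fin, Fintype.card_fin, Fintype.card_fin]
    exact hN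
  obtain ⟨em⟩ := Function.Embedding.nonempty_of_card_le hcard
  refine ⟨fun z => if (∃ c : Fin l → Fin d, em c = z.1 ∧ c z.2.1 = z.2.2) then 1 else 0, ?_⟩
  intro v hv
  funext c
  have hrow : ∀ c' : Fin l → Fin d,
      measRow (fun z => if (∃ c'' : Fin l → Fin d, em c'' = z.1 ∧ c'' z.2.1 = z.2.2)
        then (1:ℝ) else 0) (em c) c' = if c' = c then 1 else 0 := by
    intro c'
    have hfac : ∀ t : Fin l,
        (if (∃ c'' : Fin l → Fin d, em c'' = em c ∧ c'' t = c' t) then (1:ℝ) else 0)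
          = if c t = c' t then 1 else 0 := by
      intro t
      congr 1
      simp only [eq_iff_iff]
      constructor
      · rintro ⟨c'', hc1, hc2⟩
        rw [em.injective hc1] at hc2
        exact hc2
      · intro hc
        exact ⟨c, rfl, hc⟩
    by_cases hcc : c' = c
    · subst hcc
      rw [if_pos rfl]
      simp only [measRow, hfac]
      simp
    · rw [if_neg hcc]
      obtain ⟨t, ht⟩ : ∃ t, c t ≠ c' t := by
        by_contra hall
        push_neg at hall
        exact hcc (funext fun t => (hall t).symm)
      simp only [measRow]
      exact Finset.prod_eq_zero (Finset.mem_univ t) ((hfac t).trans (if_neg ht))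
  have h1 := hv (em c)
  rw [Finset.sum_congr rfl (fun c' _ => by rw [hrow c'])] at h1
  have h2 : v c = 0 := by simpa [Finset.sum_ite_eq'] using h1
  simpa using h2

lemma gramPoly_ne_zero (hN : d ^ l ≤ N) : gramPoly N l d ≠ 0 := by
  obtain ⟨x, hx⟩ := exists_full hN
  intro h
  have := eval_gramPoly x
  rw [h, map_zero] at this
  exact gram_det_of_full hx this.symm

lemma ae_full (hN : d ^ l ≤ N) :
    MeasurableSet {x : Fin N × Fin l × Fin d → ℝ | MvPolynomial.eval x (gramPoly N l d) = 0} ∧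
    (Measure.pi fun _ : Fin N × Fin l × Fin d => gaussianReal 0 1)
      {x | MvPolynomial.eval x (gramPoly N l d) = 0} = 0 ∧
    ∀ x : Fin N × Fin l × Fin d → ℝ, MvPolynomial.eval x (gramPoly N l d) ≠ 0 → Full x := by
  refine ⟨(measurable_mveval _) (measurableSet_singleton 0), ?_, ?_⟩
  · have := ae_eval_ne_zero (gramPoly N l d) (gramPoly_ne_zero hN)
    rw [MeasureTheory.ae_iff] at this
    simpa using this
  · intro x hx
    rw [eval_gramPoly] at hx
    exact full_of_gram_det hx

end Gram
section PartI

variable {n d p : ℕ} (A : Fin n → Fin d → Fin n → ℝ) (h₀ : Fin n → ℝ) (Ω : Fin p → Fin n → ℝ)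
  (f : List (Fin d → ℝ) → Fin p → ℝ)

lemma lsLoss_hankel_eq_zero (hf : ∀ xs, f xs = rnnOut h₀ A Ω xs) {N l : ℕ}
    (x : Fin N × Fin l × Fin d → ℝ) : lsLoss f x (hankel f l) = 0 := by
  unfold lsLoss
  refine Finset.sum_eq_zero fun i _ => Finset.sum_eq_zero fun m _ => ?_
  have hr := f_repr A h₀ Ω f hf l (fun t σ => x (i, t, σ)) m
  rw [show (∑ c : Fin l → Fin d, hankel f l c m * ∏ t, x (i, t, c t))
    = f (List.ofFn fun t => fun σ => x (i, t, σ)) m from hr.symm]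
  rw [sub_self]
  exact zero_pow two_ne_zero

lemma lsLoss_nonneg {N l : ℕ} (x : Fin N × Fin l × Fin d → ℝ)
    (T : (Fin l → Fin d) → Fin p → ℝ) : 0 ≤ lsLoss f x T :=
  Finset.sum_nonneg fun i _ => Finset.sum_nonneg fun m _ => sq_nonneg _

lemma part_i (hf : ∀ xs, f xs = rnnOut h₀ A Ω xs) {N l : ℕ}
    (x : Fin N × Fin l × Fin d → ℝ) (hfull : Full x) :
    IsLS f x (hankel f l) ∧ ∀ T, IsLS f x T → T = hankel f l := by
  have hzero := lsLoss_hankel_eq_zero A h₀ Ω f hf x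
  constructor
  · intro T'
    rw [hzero]
    exact lsLoss_nonneg f x T'
  · intro T hT
    have hT0 : lsLoss f x T = 0 :=
      le_antisymm (by rw [← hzero]; exact hT (hankel f l)) (lsLoss_nonneg f x T)
    have hterm : ∀ i m, (∑ c : Fin l → Fin d, T c m * ∏ t, x (i, t, c t))
        - f (List.ofFn fun t => fun σ => x (i, t, σ)) m = 0 := by
      intro i m
      have h1 := (Finset.sum_eq_zero_iff_of_nonneg
        (fun i _ => Finset.sum_nonneg fun m _ => sq_nonneg _)).mp hT0 i (Finset.mem_univ i)
      have h2 := (Finset.sum_eq_zero_iff_of_nonneg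
        (fun m _ => sq_nonneg _)).mp h1 m (Finset.mem_univ m)
      exact sq_eq_zero_iff.mp h2
    funext c m
    have hvrow : ∀ i, ∑ c' : Fin l → Fin d,
        (T c' m - hankel f l c' m) * measRow x i c' = 0 := by
      intro i
      have hr := f_repr A h₀ Ω f hf l (fun t σ => x (i, t, σ)) m
      have ht := hterm i m
      simp only [measRow, sub_mul]
      rw [Finset.sum_sub_distrib]
      have e1 : (∑ c' : Fin l → Fin d, hankel f l c' m * ∏ t, x (i, t, c' t))
          = f (List.ofFn fun t => fun σ => x (i, t, σ)) m := hr.symm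
      rw [e1]
      linarith [ht]
    have hv := hfull (fun c' => T c' m - hankel f l c' m) hvrow
    have := congrFun hv c
    simp only [Pi.zero_apply] at this
    linarith [this]

end PartI
lemma sum4_swap {α β γ δ : Type*} [Fintype α] [Fintype β] [Fintype γ] [Fintype δ]
    (g : α → β → γ → δ → ℝ) :
    ∑ a, ∑ b, ∑ c, ∑ e, g a b c e = ∑ c, ∑ e, ∑ a, ∑ b, g a b c e := by
  calc ∑ a, ∑ b, ∑ c, ∑ e, g a b c e
      = ∑ a, ∑ c, ∑ e, ∑ b, g a b c e :=
        Finset.sum_congr rfl fun a _ => (triple_swap _).trans (triple_swap _)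
    _ = ∑ c, ∑ a, ∑ e, ∑ b, g a b c e := Finset.sum_comm
    _ = ∑ c, ∑ e, ∑ a, ∑ b, g a b c e :=
        Finset.sum_congr rfl fun c _ => Finset.sum_comm

section PartII

variable {n d p L : ℕ}

lemma part_ii (A : Fin n → Fin d → Fin n → ℝ) (h₀ : Fin n → ℝ) (Ω : Fin p → Fin n → ℝ)
    (f : List (Fin d → ℝ) → Fin p → ℝ) (hf : ∀ xs, f xs = rnnOut h₀ A Ω xs)
    (hrank : (Matrix.of fun (u : Fin L → Fin d) (c : (Fin L → Fin d) × Fin p) =>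
        hankel f (2 * L) (glue u c.1) c.2).rank = n)
    (P : Matrix (Fin L → Fin d) (Fin n) ℝ)
    (S : Matrix (Fin n) ((Fin L → Fin d) × Fin p) ℝ)
    (hPS : (Matrix.of fun (u : Fin L → Fin d) (c : (Fin L → Fin d) × Fin p) =>
        hankel f (2 * L) (glue u c.1) c.2) = P * S)
    (Pd : Matrix (Fin n) (Fin L → Fin d) ℝ) (hPd : IsMoorePenrose P Pd)
    (Sd : Matrix ((Fin L → Fin d) × Fin p) (Fin n) ℝ) (hSd : IsMoorePenrose S Sd) :
    ∀ xs, rnnOut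
      (fun j => ∑ c : (Fin L → Fin d) × Fin p, Sd c j * hankel f L c.1 c.2)
      (fun a σ b => ∑ u : Fin L → Fin d, ∑ c : (Fin L → Fin d) × Fin p,
        Pd a u * Sd c b * hankel f (2 * L + 1) (glue3 u σ c.1) c.2)
      (fun m a => ∑ u : Fin L → Fin d, Pd a u * hankel f L u m) xs = f xs := by
  classical
  have hM2 : (Matrix.of fun (u : Fin L → Fin d) (c : (Fin L → Fin d) × Fin p) =>
      hankel f (2 * L) (glue u c.1) c.2) = PstarM A h₀ * SstarM A Ω := by
    ext u c
    rw [Matrix.mul_apply, Matrix.of_apply]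
    have := hankel2_PS A h₀ Ω f hf u c.1 c.2
    simpa using this
  have hPS' : P * S = PstarM A h₀ * SstarM A Ω := by rw [← hPS, hM2]
  rw [hM2] at hrank
  have hPSrank : (P * S).rank = n := by rw [hPS']; exact hrank
  have rPstar : (PstarM A h₀ (L := L)).rank = Fintype.card (Fin n) := by
    rw [Fintype.card_fin]
    refine le_antisymm ?_ ?_
    · have h := Matrix.rank_le_card_width (PstarM A h₀ (L := L))
      simpa using h
    · exact le_trans (le_of_eq hrank.symm) (Matrix.rank_mul_le_left _ _)
  have rSstar : (SstarM A Ω (L := L)).rank = Fintype.card (Fin n) := by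
    rw [Fintype.card_fin]
    refine le_antisymm ?_ ?_
    · have h := Matrix.rank_le_card_height (SstarM A Ω (L := L))
      simpa using h
    · exact le_trans (le_of_eq hrank.symm) (Matrix.rank_mul_le_right _ _)
  have rP : P.rank = Fintype.card (Fin n) := by
    rw [Fintype.card_fin]
    refine le_antisymm ?_ ?_
    · have h := Matrix.rank_le_card_width P
      simpa using h
    · exact le_trans (le_of_eq hPSrank.symm) (Matrix.rank_mul_le_left _ _)
  have rS : S.rank = Fintype.card (Fin n) := by
    rw [Fintype.card_fin]
    refine le_antisymm ?_ ?_
    · have h := Matrix.rank_le_card_height S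
      simpa using h
    · exact le_trans (le_of_eq hPSrank.symm) (Matrix.rank_mul_le_right _ _)
  have hPdP : Pd * P = 1 := by
    have h1 : P * (Pd * P) = P * (1 : Matrix (Fin n) (Fin n) ℝ) := by
      rw [Matrix.mul_one, ← Matrix.mul_assoc]
      exact hPd.1
    exact left_cancel rP h1
  have hSSd : S * Sd = 1 := by
    have h1 : (S * Sd) * S = (1 : Matrix (Fin n) (Fin n) ℝ) * S := by
      rw [Matrix.one_mul]
      exact hSd.1
    exact right_cancel rS h1
  set Mm : Matrix (Fin n) (Fin n) ℝ := SstarM A Ω (L := L) * Sd with hMmdef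
  set Nm : Matrix (Fin n) (Fin n) ℝ := Pd * PstarM A h₀ (L := L) with hNmdef
  have hMN : Mm * Nm = 1 := by
    have e1 : PstarM A h₀ * (Mm * Nm * SstarM A Ω) =
        P * ((S * Sd) * ((Pd * P) * S)) := by
      rw [hMmdef, hNmdef]
      calc PstarM A h₀ (L := L) * (SstarM A Ω (L := L) * Sd * (Pd * PstarM A h₀ (L := L)) * SstarM A Ω (L := L))
          = PstarM A h₀ (L := L) * (SstarM A Ω (L := L) * (Sd * (Pd * (PstarM A h₀ (L := L) * SstarM A Ω (L := L))))) := by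
            simp only [Matrix.mul_assoc]
        _ = PstarM A h₀ (L := L) * (SstarM A Ω (L := L) * (Sd * (Pd * (P * S)))) := by rw [← hPS']
        _ = (PstarM A h₀ (L := L) * SstarM A Ω (L := L)) * (Sd * (Pd * (P * S))) := by
            simp only [Matrix.mul_assoc]
        _ = (P * S) * (Sd * (Pd * (P * S))) := by rw [← hPS']
        _ = P * ((S * Sd) * ((Pd * P) * S)) := by simp only [Matrix.mul_assoc]
    have e2 : P * ((S * Sd) * ((Pd * P) * S)) =
        PstarM A h₀ * ((1 : Matrix (Fin n) (Fin n) ℝ) * SstarM A Ω) := by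
      rw [hSSd, hPdP, Matrix.one_mul, Matrix.one_mul, hPS']
      rw [Matrix.one_mul]
    have e3 := left_cancel rPstar (e1.trans e2)
    rw [Matrix.one_mul] at e3
    exact right_cancel rSstar (e3.trans (Matrix.one_mul _).symm)
  have conj := rnn_conj A h₀ Ω Mm Nm hMN
    (fun j => ∑ c : (Fin L → Fin d) × Fin p, Sd c j * hankel f L c.1 c.2)
    (fun a σ b => ∑ u : Fin L → Fin d, ∑ c : (Fin L → Fin d) × Fin p,
      Pd a u * Sd c b * hankel f (2 * L + 1) (glue3 u σ c.1) c.2)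
    (fun m a => ∑ u : Fin L → Fin d, Pd a u * hankel f L u m)
    ?_ ?_ ?_
  · intro xs
    rw [conj xs, ← hf xs]
  · -- initial state
    funext j
    calc ∑ c : (Fin L → Fin d) × Fin p, Sd c j * hankel f L c.1 c.2
        = ∑ c : (Fin L → Fin d) × Fin p, ∑ k, Sd c j * (h₀ k * SstarM A Ω k c) := by
          refine Finset.sum_congr rfl fun c _ => ?_
          rw [hankelL_S A h₀ Ω f hf c.1 c.2, Finset.mul_sum]
      _ = ∑ k, ∑ c : (Fin L → Fin d) × Fin p, Sd c j * (h₀ k * SstarM A Ω k c) :=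
          Finset.sum_comm
      _ = ∑ i, h₀ i * Mm i j := by
          refine Finset.sum_congr rfl fun k _ => ?_
          rw [hMmdef, Matrix.mul_apply, Finset.mul_sum]
          exact Finset.sum_congr rfl fun c _ => by ring
  · -- transition tensor
    intro a σ b
    calc ∑ u : Fin L → Fin d, ∑ c : (Fin L → Fin d) × Fin p,
          Pd a u * Sd c b * hankel f (2 * L + 1) (glue3 u σ c.1) c.2
        = ∑ u : Fin L → Fin d, ∑ c : (Fin L → Fin d) × Fin p, ∑ j, ∑ k,
            Pd a u * Sd c b * (PstarM A h₀ u j * A j σ k * SstarM A Ω k c) := by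
          refine Finset.sum_congr rfl fun u _ => Finset.sum_congr rfl fun c _ => ?_
          have h3 := hankel3_PAS A h₀ Ω f hf u σ c.1 c.2
          simp only [Prod.mk.eta] at h3
          rw [h3, Finset.mul_sum]
          exact Finset.sum_congr rfl fun j _ => by rw [Finset.mul_sum]
      _ = ∑ j, ∑ k, ∑ u : Fin L → Fin d, ∑ c : (Fin L → Fin d) × Fin p,
            Pd a u * Sd c b * (PstarM A h₀ u j * A j σ k * SstarM A Ω k c) := sum4_swap _
      _ = ∑ j, ∑ i, Nm a j * A j σ i * Mm i b := by
          refine Finset.sum_congr rfl fun j _ => Finset.sum_congr rfl fun k _ => ?_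
          rw [hMmdef, hNmdef, Matrix.mul_apply, Matrix.mul_apply]
          rw [Finset.sum_mul, Finset.sum_mul]
          refine Finset.sum_congr rfl fun u _ => ?_
          rw [Finset.mul_sum]
          exact Finset.sum_congr rfl fun c _ => by ring
  · -- output matrix
    intro m a
    calc ∑ u : Fin L → Fin d, Pd a u * hankel f L u m
        = ∑ u : Fin L → Fin d, ∑ j, Pd a u * (Ω m j * PstarM A h₀ u j) := by
          refine Finset.sum_congr rfl fun u _ => ?_
          rw [hankelL_P A h₀ Ω f hf u m, Finset.mul_sum]
      _ = ∑ j, ∑ u : Fin L → Fin d, Pd a u * (Ω m j * PstarM A h₀ u j) := Finset.sum_comm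
      _ = ∑ j, Nm a j * Ω m j := by
          refine Finset.sum_congr rfl fun j _ => ?_
          rw [hNmdef, Matrix.mul_apply, Finset.sum_mul]
          exact Finset.sum_congr rfl fun u _ => by ring

end PartII
/-- Consistency of the spectral learning algorithm for linear 2-RNNs: with probability one
over i.i.d. standard Gaussian inputs (with `N_l ≥ d^l` samples for `l ∈ {L,2L,2L+1}`),
(i) the unique least-squares solutions are the true Hankel tensors, and (ii) the linear
2-RNN constructed from them via any rank-`n` factorization computes `f`. -/
theorem spectral_learning_consistency {n d p L NL N2 N3 : ℕ}
    (h₀ : Fin n → ℝ) (A : Fin n → Fin d → Fin n → ℝ) (Ω : Fin p → Fin n → ℝ)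
    (f : List (Fin d → ℝ) → Fin p → ℝ) (hf : ∀ xs, f xs = rnnOut h₀ A Ω xs)
    (hmin : IsMinimal n f)
    (hrank : (Matrix.of fun (u : Fin L → Fin d) (c : (Fin L → Fin d) × Fin p) =>
        hankel f (2 * L) (glue u c.1) c.2).rank = n)
    (hNL : d ^ L ≤ NL) (hN2 : d ^ (2 * L) ≤ N2) (hN3 : d ^ (2 * L + 1) ≤ N3) :
    ∀ᵐ ω ∂((Measure.pi fun _ : Fin NL × Fin L × Fin d => gaussianReal 0 1).prod
        ((Measure.pi fun _ : Fin N2 × Fin (2 * L) × Fin d => gaussianReal 0 1).prod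
          (Measure.pi fun _ : Fin N3 × Fin (2 * L + 1) × Fin d => gaussianReal 0 1))),
      -- (i) the true Hankel tensors are the unique least-squares solutions
      (IsLS f ω.1 (hankel f L) ∧ ∀ T, IsLS f ω.1 T → T = hankel f L) ∧
      (IsLS f ω.2.1 (hankel f (2 * L)) ∧ ∀ T, IsLS f ω.2.1 T → T = hankel f (2 * L)) ∧
      (IsLS f ω.2.2 (hankel f (2 * L + 1)) ∧
        ∀ T, IsLS f ω.2.2 T → T = hankel f (2 * L + 1)) ∧
      -- (ii) the constructed linear 2-RNN computes f
      (∀ (TL : (Fin L → Fin d) → Fin p → ℝ)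
          (T2 : (Fin (2 * L) → Fin d) → Fin p → ℝ)
          (T3 : (Fin (2 * L + 1) → Fin d) → Fin p → ℝ),
        IsLS f ω.1 TL → IsLS f ω.2.1 T2 → IsLS f ω.2.2 T3 →
        ∀ (P : Matrix (Fin L → Fin d) (Fin n) ℝ)
          (S : Matrix (Fin n) ((Fin L → Fin d) × Fin p) ℝ),
          (Matrix.of fun (u : Fin L → Fin d) (c : (Fin L → Fin d) × Fin p) =>
            T2 (glue u c.1) c.2) = P * S →
        ∀ (Pd : Matrix (Fin n) (Fin L → Fin d) ℝ), IsMoorePenrose P Pd →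
        ∀ (Sd : Matrix ((Fin L → Fin d) × Fin p) (Fin n) ℝ), IsMoorePenrose S Sd →
        ∀ xs, rnnOut
          (fun j => ∑ c : (Fin L → Fin d) × Fin p, Sd c j * TL c.1 c.2)
          (fun a σ b => ∑ u : Fin L → Fin d, ∑ c : (Fin L → Fin d) × Fin p,
            Pd a u * Sd c b * T3 (glue3 u σ c.1) c.2)
          (fun m a => ∑ u : Fin L → Fin d, Pd a u * TL u m) xs = f xs) := by
  classical
  obtain ⟨hmB1, hnB1, hfull1⟩ := ae_full (N := NL) (l := L) (d := d) hNL
  obtain ⟨hmB2, hnB2, hfull2⟩ := ae_full (N := N2) (l := 2 * L) (d := d) hN2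
  obtain ⟨hmB3, hnB3, hfull3⟩ := ae_full (N := N3) (l := 2 * L + 1) (d := d) hN3
  rw [MeasureTheory.ae_iff]
  set B1 := {x : Fin NL × Fin L × Fin d → ℝ |
    MvPolynomial.eval x (gramPoly NL L d) = 0} with hB1def
  set B2 := {x : Fin N2 × Fin (2 * L) × Fin d → ℝ |
    MvPolynomial.eval x (gramPoly N2 (2 * L) d) = 0} with hB2def
  set B3 := {x : Fin N3 × Fin (2 * L + 1) × Fin d → ℝ |
    MvPolynomial.eval x (gramPoly N3 (2 * L + 1) d) = 0} with hB3def
  refine MeasureTheory.measure_mono_null (t := (B1 ×ˢ Set.univ) ∪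
    ((Set.univ ×ˢ (B2 ×ˢ Set.univ)) ∪ (Set.univ ×ˢ (Set.univ ×ˢ B3)))) ?_ ?_
  · -- the bad event is contained in the union of the three bad cylinders
    intro ω hω
    by_contra hmem
    apply hω
    simp only [Set.mem_union, Set.mem_prod, Set.mem_univ, and_true, true_and, not_or] at hmem
    obtain ⟨hm1, hm2, hm3⟩ := hmem
    have F1 : Full ω.1 := hfull1 ω.1 hm1
    have F2 : Full ω.2.1 := hfull2 ω.2.1 hm2
    have F3 : Full ω.2.2 := hfull3 ω.2.2 hm3
    have P1 := part_i A h₀ Ω f hf ω.1 F1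
    have P2 := part_i A h₀ Ω f hf ω.2.1 F2
    have P3 := part_i A h₀ Ω f hf ω.2.2 F3
    refine ⟨P1, P2, P3, ?_⟩
    intro TL T2 T3 hTL hT2 hT3 P S hPS Pd hPd Sd hSd
    have eTL := P1.2 TL hTL
    have eT2 := P2.2 T2 hT2
    have eT3 := P3.2 T3 hT3
    subst eTL; subst eT2; subst eT3
    exact part_ii A h₀ Ω f hf hrank P S hPS Pd hPd Sd hSd
  · -- the union of bad cylinders is null
    refine MeasureTheory.measure_union_null ?_ (MeasureTheory.measure_union_null ?_ ?_)
    · rw [MeasureTheory.Measure.prod_prod, hnB1, zero_mul]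
    · rw [MeasureTheory.Measure.prod_prod, MeasureTheory.Measure.prod_prod, hnB2,
        zero_mul, mul_zero]
    · rw [MeasureTheory.Measure.prod_prod, MeasureTheory.Measure.prod_prod, hnB3,
        mul_zero, mul_zero]
end
end
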